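/- (Proposition 1) Let R be an invertible skew-invertible matrix on V⊗V satisfying the Yang–Baxter equation R₁₂R₂₃R₁₂ = R₂₃R₁₂R₂₃, with skew inverse Ψ, and set C := Tr₍₁₎Ψ, D := Tr₍₂₎Ψ. Then the following identities of matrices on V⊗V hold: C₁·Ψ = R₂₁⁻¹·C₂, Ψ·C₁ = C₂·R₂₁⁻¹, D₂·Ψ = R₂₁⁻¹·D₁, and Ψ·D₂ = D₁·R₂₁⁻¹. -/
import Mathlib


open scoped BigOperators

namespace BMWPaper

noncomputable section

/-- Operators on `V ⊗ V`, `V = ι → ℂ`, as matrices indexed by pairs. -/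
abbrev Op (ι : Type*) := Matrix (ι × ι) (ι × ι) ℂ

/-- Operators on `V ⊗ V ⊗ V` as matrices indexed by triples. -/
abbrev Op3 (ι : Type*) := Matrix (ι × ι × ι) (ι × ι × ι) ℂ

variable {ι : Type*} [Fintype ι] [DecidableEq ι]

/-- `M₁₂ = M ⊗ I`. -/
def op12 (M : Op ι) : Op3 ι :=
  Matrix.of fun p q => M (p.1, p.2.1) (q.1, q.2.1) * (if p.2.2 = q.2.2 then 1 else 0)

/-- `M₂₃ = I ⊗ M`. -/
def op23 (M : Op ι) : Op3 ι :=
  Matrix.of fun p q => (if p.1 = q.1 then 1 else 0) * M (p.2.1, p.2.2) (q.2.1, q.2.2)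

/-- The permutation operator `P`, `P^{kl}_{ij} = δ^k_j δ^l_i`. -/
def Pmat (ι : Type*) [DecidableEq ι] : Op ι :=
  Matrix.of fun p q => if p.1 = q.2 ∧ p.2 = q.1 then (1 : ℂ) else 0

/-- Partial trace over the first factor: `(Tr₍₁₎M)^l_j = ∑_a M^{al}_{aj}`. -/
def tr1 (M : Op ι) : Matrix ι ι ℂ := Matrix.of fun l j => ∑ a, M (a, l) (a, j)

/-- Partial trace over the second factor: `(Tr₍₂₎M)^k_i = ∑_a M^{ka}_{ia}`. -/
def tr2 (M : Op ι) : Matrix ι ι ℂ := Matrix.of fun k i => ∑ a, M (k, a) (i, a)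

/-- Partial trace over the middle factor of an operator on `V ⊗ V ⊗ V`. -/
def tr2of3 (M : Op3 ι) : Op ι :=
  Matrix.of fun p q => ∑ a, M (p.1, a, p.2) (q.1, a, q.2)

/-- `U₁ = U ⊗ I` for an `N×N` matrix `U`. -/
def u1 (U : Matrix ι ι ℂ) : Op ι :=
  Matrix.of fun p q => U p.1 q.1 * (if p.2 = q.2 then 1 else 0)

/-- `U₂ = I ⊗ U` for an `N×N` matrix `U`. -/
def u2 (U : Matrix ι ι ℂ) : Op ι :=
  Matrix.of fun p q => (if p.1 = q.1 then 1 else 0) * U p.2 q.2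

/-- `Ψ` is a skew inverse of `R`: `Tr₍₂₎(R₁₂Ψ₂₃) = P₁₃ = Tr₍₂₎(Ψ₁₂R₂₃)`. -/
def SkewInverse (R Ψ : Op ι) : Prop :=
  tr2of3 (op12 R * op23 Ψ) = Pmat ι ∧ tr2of3 (op12 Ψ * op23 R) = Pmat ι

/-- The Yang–Baxter equation `R₁₂R₂₃R₁₂ = R₂₃R₁₂R₂₃`. -/
def YangBaxter (R : Op ι) : Prop :=
  op12 R * op23 R * op12 R = op23 R * op12 R * op23 R

/-- `K := λ⁻¹ν⁻¹(qI - R)(q⁻¹I + R)` with `λ := q - q⁻¹`. -/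
def Kmat (q ν : ℂ) (R : Op ι) : Op ι :=
  ((q - q⁻¹)⁻¹ * ν⁻¹) • ((q • (1 : Op ι) - R) * (q⁻¹ • (1 : Op ι) + R))

/-- `μ := λ⁻¹ ν⁻¹ (q - ν)(q⁻¹ + ν)`. -/
def muBMW (q ν : ℂ) : ℂ := ((q - q⁻¹)⁻¹ * ν⁻¹) * ((q - ν) * (q⁻¹ + ν))

/-- `R` is a BMW type R-matrix with parameters `(q, ν)`: `R` is invertible, satisfies
the Yang–Baxter equation, and with `K := Kmat q ν R` the relations
`RK = KR = νK`, `K₂₃R₁₂K₂₃ = ν⁻¹K₂₃` and `K₂₃R₁₂⁻¹K₂₃ = νK₂₃` hold. -/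
def BMWType (q ν : ℂ) (R : Op ι) : Prop :=
  IsUnit R ∧ YangBaxter R ∧
  R * Kmat q ν R = ν • Kmat q ν R ∧
  Kmat q ν R * R = ν • Kmat q ν R ∧
  op23 (Kmat q ν R) * op12 R * op23 (Kmat q ν R) = ν⁻¹ • op23 (Kmat q ν R) ∧
  op23 (Kmat q ν R) * op12 R⁻¹ * op23 (Kmat q ν R) = ν • op23 (Kmat q ν R)
set_option linter.unusedSectionVars false

def sprod (X Y : Op ι) : Op ι :=
  Matrix.of fun p q => ∑ a, ∑ b, X (p.1, a) (q.1, b) * Y (b, p.2) (a, q.2)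

lemma sprod_apply (X Y : Op ι) (k l i j : ι) :
    sprod X Y (k, l) (i, j) = ∑ a, ∑ b, X (k, a) (i, b) * Y (b, l) (a, j) := rfl

lemma tr2of3_op (X Y : Op ι) : tr2of3 (op12 X * op23 Y) = sprod X Y := by
  ext ⟨k, l⟩ ⟨i, j⟩
  simp [tr2of3, sprod, op12, op23, Matrix.mul_apply, Fintype.sum_prod_type,
    mul_ite, ite_mul, Finset.sum_ite_eq, Finset.sum_ite_eq']

lemma sprod_P_left (X : Op ι) : sprod (Pmat ι) X = X := by
  ext ⟨k, l⟩ ⟨i, j⟩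
  simp [sprod, Pmat, ite_and, ite_mul, Finset.sum_ite_eq, Finset.sum_ite_eq']

lemma sprod_P_right (X : Op ι) : sprod X (Pmat ι) = X := by
  ext ⟨k, l⟩ ⟨i, j⟩
  simp [sprod, Pmat, ite_and, mul_ite, Finset.sum_ite_eq, Finset.sum_ite_eq']

lemma sum2_comm (f : ι → ι → ℂ) : ∑ a, ∑ b, f a b = ∑ b, ∑ a, f a b :=
  Finset.sum_comm

lemma sum4_comm (f : ι → ι → ι → ι → ℂ) :
    ∑ a, ∑ b, ∑ c, ∑ d, f a b c d = ∑ c, ∑ d, ∑ a, ∑ b, f a b c d := by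
  calc ∑ a, ∑ b, ∑ c, ∑ d, f a b c d
      = ∑ a, ∑ c, ∑ b, ∑ d, f a b c d :=
        Finset.sum_congr rfl fun a _ => sum2_comm _
    _ = ∑ a, ∑ c, ∑ d, ∑ b, f a b c d :=
        Finset.sum_congr rfl fun a _ => Finset.sum_congr rfl fun c _ => sum2_comm _
    _ = ∑ c, ∑ a, ∑ d, ∑ b, f a b c d := sum2_comm _
    _ = ∑ c, ∑ d, ∑ a, ∑ b, f a b c d :=
        Finset.sum_congr rfl fun c _ => sum2_comm _

lemma sum3_rev (f : ι → ι → ι → ℂ) :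
    ∑ a, ∑ b, ∑ c, f a b c = ∑ c, ∑ b, ∑ a, f a b c := by
  calc ∑ a, ∑ b, ∑ c, f a b c
      = ∑ b, ∑ a, ∑ c, f a b c := sum2_comm _
    _ = ∑ b, ∑ c, ∑ a, f a b c := Finset.sum_congr rfl fun b _ => sum2_comm _
    _ = ∑ c, ∑ b, ∑ a, f a b c := sum2_comm _

lemma sprod_assoc (X Y Z : Op ι) : sprod (sprod X Y) Z = sprod X (sprod Y Z) := by
  ext ⟨k, l⟩ ⟨i, j⟩
  simp only [sprod, Matrix.of_apply, Finset.sum_mul, Finset.mul_sum]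
  rw [sum4_comm (fun a b c d => X (k, c) (i, d) * Y (d, a) (c, b) * Z (b, l) (a, j))]
  refine Finset.sum_congr rfl fun a _ => Finset.sum_congr rfl fun b _ =>
    Finset.sum_congr rfl fun c _ => Finset.sum_congr rfl fun d _ => ?_
  ring

lemma sprod_one_right (X : Op ι) : sprod X 1 = u1 (tr2 X) := by
  ext ⟨k, l⟩ ⟨i, j⟩
  simp [sprod, u1, tr2, Matrix.one_apply, Prod.ext_iff, ite_and, mul_ite,
    Finset.sum_ite_eq, Finset.sum_ite_eq', Finset.sum_mul]

lemma sprod_one_left (X : Op ι) : sprod 1 X = u2 (tr1 X) := by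
  ext ⟨k, l⟩ ⟨i, j⟩
  simp [sprod, u2, tr1, Matrix.one_apply, Prod.ext_iff, ite_and, ite_mul,
    Finset.sum_ite_eq, Finset.sum_ite_eq', Finset.mul_sum]

lemma op12_mul (X Y : Op ι) : op12 X * op12 Y = op12 (X * Y) := by
  ext ⟨k, l, m⟩ ⟨i, j, n⟩
  simp [op12, Matrix.mul_apply, Fintype.sum_prod_type, mul_ite, ite_mul,
    Finset.sum_ite_eq, Finset.sum_ite_eq', Finset.sum_mul, Finset.mul_sum]

lemma op23_mul (X Y : Op ι) : op23 X * op23 Y = op23 (X * Y) := by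
  ext ⟨k, l, m⟩ ⟨i, j, n⟩
  simp [op23, Matrix.mul_apply, Fintype.sum_prod_type, mul_ite, ite_mul,
    Finset.sum_ite_eq, Finset.sum_ite_eq', Finset.sum_mul, Finset.mul_sum]

lemma op12_one : op12 (1 : Op ι) = 1 := by
  ext ⟨k, l, m⟩ ⟨i, j, n⟩
  simp only [op12, Matrix.of_apply, Matrix.one_apply, Prod.ext_iff, ite_and, mul_ite,
    mul_one, mul_zero]
  try (split_ifs <;> simp_all)

lemma op23_one : op23 (1 : Op ι) = 1 := by
  ext ⟨k, l, m⟩ ⟨i, j, n⟩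
  simp only [op23, Matrix.of_apply, Matrix.one_apply, Prod.ext_iff, ite_and, ite_mul,
    one_mul, zero_mul]
  try (split_ifs <;> simp_all)

lemma Pmat_mul_Pmat : Pmat ι * Pmat ι = 1 := by
  ext ⟨k, l⟩ ⟨i, j⟩
  simp [Pmat, Matrix.mul_apply, Matrix.one_apply, Fintype.sum_prod_type, Prod.ext_iff,
    ite_and, mul_ite, ite_mul, Finset.sum_ite_eq, Finset.sum_ite_eq']
  try (split_ifs <;> simp_all)

lemma comp1 (X Y Z : Op ι) (k l m i j n : ι) :
    (op12 X * op23 Y * op12 Z) (k, l, m) (i, j, n)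
      = ∑ x, ∑ y, ∑ u, X (k, l) (x, y) * Y (y, m) (u, n) * Z (x, u) (i, j) := by
  simp [op12, op23, Matrix.mul_apply, Fintype.sum_prod_type, mul_ite, ite_mul,
    Finset.sum_ite_eq, Finset.sum_ite_eq', Finset.sum_mul, Finset.mul_sum]
  exact Finset.sum_congr rfl fun x _ => sum2_comm _

lemma comp2 (X Y Z : Op ι) (k l m i j n : ι) :
    (op23 X * op12 Y * op23 Z) (k, l, m) (i, j, n)
      = ∑ u, ∑ v, ∑ y, X (l, m) (u, v) * Y (k, u) (i, y) * Z (y, v) (j, n) := by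
  simp [op12, op23, Matrix.mul_apply, Fintype.sum_prod_type, mul_ite, ite_mul,
    Finset.sum_ite_eq, Finset.sum_ite_eq', Finset.sum_mul, Finset.mul_sum]
  exact sum3_rev _

def trW3 (W : Matrix ι ι ℂ) (M : Op3 ι) : Op ι :=
  Matrix.of fun p q => ∑ a, ∑ b, M (p.1, p.2, a) (q.1, q.2, b) * W b a

def trW1 (W : Matrix ι ι ℂ) (M : Op3 ι) : Op ι :=
  Matrix.of fun p q => ∑ a, ∑ b, M (a, p.1, p.2) (b, q.1, q.2) * W b a

def wmatD (W : Matrix ι ι ℂ) (X Z : Op ι) : Op ι :=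
  Matrix.of fun p q => ∑ m, ∑ n, ∑ v, X (p.2, m) (q.1, v) * Z (p.1, v) (q.2, n) * W n m

def wmatC (W : Matrix ι ι ℂ) (X Z : Op ι) : Op ι :=
  Matrix.of fun p q => ∑ a, ∑ b, ∑ x, X (a, p.1) (x, q.2) * Z (x, p.2) (b, q.1) * W b a

lemma sum3_cyc (f : ι → ι → ι → ℂ) :
    ∑ a, ∑ b, ∑ c, f a b c = ∑ c, ∑ a, ∑ b, f a b c := by
  calc ∑ a, ∑ b, ∑ c, f a b c
      = ∑ a, ∑ c, ∑ b, f a b c := Finset.sum_congr rfl fun a _ => sum2_comm _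
    _ = ∑ c, ∑ a, ∑ b, f a b c := sum2_comm _

lemma sum5_comm (f : ι → ι → ι → ι → ι → ℂ) :
    ∑ m, ∑ n, ∑ x, ∑ y, ∑ u, f m n x y u
      = ∑ x, ∑ y, ∑ u, ∑ m, ∑ n, f m n x y u := by
  calc ∑ m, ∑ n, ∑ x, ∑ y, ∑ u, f m n x y u
      = ∑ m, ∑ x, ∑ n, ∑ y, ∑ u, f m n x y u :=
        Finset.sum_congr rfl fun m _ => sum2_comm _
    _ = ∑ m, ∑ x, ∑ y, ∑ n, ∑ u, f m n x y u :=
        Finset.sum_congr rfl fun m _ => Finset.sum_congr rfl fun x _ => sum2_comm _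
    _ = ∑ m, ∑ x, ∑ y, ∑ u, ∑ n, f m n x y u :=
        Finset.sum_congr rfl fun m _ => Finset.sum_congr rfl fun x _ =>
          Finset.sum_congr rfl fun y _ => sum2_comm _
    _ = ∑ x, ∑ m, ∑ y, ∑ u, ∑ n, f m n x y u := sum2_comm _
    _ = ∑ x, ∑ y, ∑ m, ∑ u, ∑ n, f m n x y u :=
        Finset.sum_congr rfl fun x _ => sum2_comm _
    _ = ∑ x, ∑ y, ∑ u, ∑ m, ∑ n, f m n x y u :=
        Finset.sum_congr rfl fun x _ => Finset.sum_congr rfl fun y _ => sum2_comm _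

lemma L1D (R Ψ : Op ι) (hS1 : sprod R Ψ = Pmat ι) (y u : ι) :
    ∑ m, ∑ n, R (y, m) (u, n) * tr2 Ψ n m = if y = u then 1 else 0 := by
  calc ∑ m, ∑ n, R (y, m) (u, n) * tr2 Ψ n m
      = ∑ m, ∑ n, ∑ s, R (y, m) (u, n) * Ψ (n, s) (m, s) := by
        simp [tr2, Finset.mul_sum]
    _ = ∑ s, ∑ m, ∑ n, R (y, m) (u, n) * Ψ (n, s) (m, s) := sum3_cyc _
    _ = ∑ s, Pmat ι (y, s) (u, s) := by
        refine Finset.sum_congr rfl fun s _ => ?_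
        rw [← sprod_apply, hS1]
    _ = if y = u then 1 else 0 := by
        simp [Pmat, ite_and, Finset.sum_ite_eq]

lemma L1C (R Ψ : Op ι) (hS2 : sprod Ψ R = Pmat ι) (u y : ι) :
    ∑ i, ∑ k, tr1 Ψ i k * R (k, u) (i, y) = if u = y then 1 else 0 := by
  calc ∑ i, ∑ k, tr1 Ψ i k * R (k, u) (i, y)
      = ∑ i, ∑ k, ∑ p, Ψ (p, i) (p, k) * R (k, u) (i, y) := by
        simp [tr1, Finset.sum_mul]
    _ = ∑ p, ∑ i, ∑ k, Ψ (p, i) (p, k) * R (k, u) (i, y) := sum3_cyc _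
    _ = ∑ p, Pmat ι (p, u) (p, y) := by
        refine Finset.sum_congr rfl fun p _ => ?_
        rw [← sprod_apply, hS2]
    _ = if u = y then 1 else 0 := by
        simp [Pmat, ite_and, Finset.sum_ite_eq']

lemma T2 (R Ψ : Op ι) (hS1 : sprod R Ψ = Pmat ι) (X Z : Op ι) :
    trW3 (tr2 Ψ) (op12 X * op23 R * op12 Z) = X * Z := by
  ext ⟨k, l⟩ ⟨i, j⟩
  show ∑ m, ∑ n, (op12 X * op23 R * op12 Z) (k, l, m) (i, j, n) * tr2 Ψ n m = _
  calc ∑ m, ∑ n, (op12 X * op23 R * op12 Z) (k, l, m) (i, j, n) * tr2 Ψ n m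
      = ∑ m, ∑ n, ∑ x, ∑ y, ∑ u,
          X (k, l) (x, y) * R (y, m) (u, n) * Z (x, u) (i, j) * tr2 Ψ n m := by
        simp only [comp1, Finset.sum_mul]
    _ = ∑ x, ∑ y, ∑ u, ∑ m, ∑ n,
          X (k, l) (x, y) * R (y, m) (u, n) * Z (x, u) (i, j) * tr2 Ψ n m := sum5_comm _
    _ = ∑ x, ∑ y, ∑ u, X (k, l) (x, y) * Z (x, u) (i, j) *
          (∑ m, ∑ n, R (y, m) (u, n) * tr2 Ψ n m) := by
        refine Finset.sum_congr rfl fun x _ => Finset.sum_congr rfl fun y _ =>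
          Finset.sum_congr rfl fun u _ => ?_
        simp only [Finset.mul_sum]
        exact Finset.sum_congr rfl fun m _ => Finset.sum_congr rfl fun n _ => by ring
    _ = ∑ x, ∑ y, ∑ u, X (k, l) (x, y) * Z (x, u) (i, j) * (if y = u then 1 else 0) := by
        simp only [L1D R Ψ hS1]
    _ = (X * Z) (k, l) (i, j) := by
        simp [Matrix.mul_apply, Fintype.sum_prod_type, mul_ite, Finset.sum_ite_eq]

lemma T2c (R Ψ : Op ι) (hS2 : sprod Ψ R = Pmat ι) (X Z : Op ι) :
    trW1 (tr1 Ψ) (op23 X * op12 R * op23 Z) = X * Z := by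
  ext ⟨l, m⟩ ⟨j, n⟩
  show ∑ a, ∑ b, (op23 X * op12 R * op23 Z) (a, l, m) (b, j, n) * tr1 Ψ b a = _
  calc ∑ a, ∑ b, (op23 X * op12 R * op23 Z) (a, l, m) (b, j, n) * tr1 Ψ b a
      = ∑ a, ∑ b, ∑ u, ∑ v, ∑ y,
          X (l, m) (u, v) * R (a, u) (b, y) * Z (y, v) (j, n) * tr1 Ψ b a := by
        simp only [comp2, Finset.sum_mul]
    _ = ∑ u, ∑ v, ∑ y, ∑ a, ∑ b,
          X (l, m) (u, v) * R (a, u) (b, y) * Z (y, v) (j, n) * tr1 Ψ b a := sum5_comm _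
    _ = ∑ u, ∑ v, ∑ y, X (l, m) (u, v) * Z (y, v) (j, n) *
          (∑ a, ∑ b, tr1 Ψ b a * R (a, u) (b, y)) := by
        refine Finset.sum_congr rfl fun u _ => Finset.sum_congr rfl fun v _ =>
          Finset.sum_congr rfl fun y _ => ?_
        simp only [Finset.mul_sum]
        exact Finset.sum_congr rfl fun a _ => Finset.sum_congr rfl fun b _ => by ring
    _ = ∑ u, ∑ v, ∑ y, X (l, m) (u, v) * Z (y, v) (j, n) * (if u = y then 1 else 0) := by
        refine Finset.sum_congr rfl fun u _ => Finset.sum_congr rfl fun v _ =>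
          Finset.sum_congr rfl fun y _ => ?_
        rw [sum2_comm (fun a b => tr1 Ψ b a * R (a, u) (b, y)), L1C R Ψ hS2]
    _ = (X * Z) (l, m) (j, n) := by
        rw [sum3_cyc (fun u v y => X (l, m) (u, v) * Z (y, v) (j, n) * (if u = y then 1 else 0))]
        simp [Matrix.mul_apply, Fintype.sum_prod_type, mul_ite, ite_mul,
          Finset.sum_ite_eq, Finset.sum_ite_eq']

lemma sum4_cyc (f : ι → ι → ι → ι → ℂ) :
    ∑ a, ∑ b, ∑ c, ∑ d, f a b c d = ∑ b, ∑ c, ∑ d, ∑ a, f a b c d := by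
  calc ∑ a, ∑ b, ∑ c, ∑ d, f a b c d
      = ∑ b, ∑ a, ∑ c, ∑ d, f a b c d := sum2_comm _
    _ = ∑ b, ∑ c, ∑ a, ∑ d, f a b c d :=
        Finset.sum_congr rfl fun b _ => sum2_comm _
    _ = ∑ b, ∑ c, ∑ d, ∑ a, f a b c d :=
        Finset.sum_congr rfl fun b _ => Finset.sum_congr rfl fun c _ => sum2_comm _

lemma T3 (W : Matrix ι ι ℂ) (X Y Z : Op ι) :
    trW3 W (op23 X * op12 Y * op23 Z) = sprod Y (wmatD W X Z) := by
  ext ⟨k, l⟩ ⟨i, j⟩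
  show ∑ m, ∑ n, (op23 X * op12 Y * op23 Z) (k, l, m) (i, j, n) * W n m = _
  calc ∑ m, ∑ n, (op23 X * op12 Y * op23 Z) (k, l, m) (i, j, n) * W n m
      = ∑ m, ∑ n, ∑ u, ∑ v, ∑ y,
          X (l, m) (u, v) * Y (k, u) (i, y) * Z (y, v) (j, n) * W n m := by
        simp only [comp2, Finset.sum_mul]
    _ = ∑ u, ∑ v, ∑ y, ∑ m, ∑ n,
          X (l, m) (u, v) * Y (k, u) (i, y) * Z (y, v) (j, n) * W n m := sum5_comm _
    _ = ∑ u, ∑ y, ∑ m, ∑ n, ∑ v,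
          X (l, m) (u, v) * Y (k, u) (i, y) * Z (y, v) (j, n) * W n m :=
        Finset.sum_congr rfl fun u _ => sum4_cyc _
    _ = sprod Y (wmatD W X Z) (k, l) (i, j) := by
        rw [sprod_apply]
        simp only [wmatD, Matrix.of_apply, Finset.mul_sum]
        refine Finset.sum_congr rfl fun u _ => Finset.sum_congr rfl fun y _ =>
          Finset.sum_congr rfl fun m _ => Finset.sum_congr rfl fun n _ =>
          Finset.sum_congr rfl fun v _ => by ring

lemma T3c (W : Matrix ι ι ℂ) (X Y Z : Op ι) :
    trW1 W (op12 X * op23 Y * op12 Z) = sprod (wmatC W X Z) Y := by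
  ext ⟨l, m⟩ ⟨j, n⟩
  show ∑ a, ∑ b, (op12 X * op23 Y * op12 Z) (a, l, m) (b, j, n) * W b a = _
  calc ∑ a, ∑ b, (op12 X * op23 Y * op12 Z) (a, l, m) (b, j, n) * W b a
      = ∑ a, ∑ b, ∑ x, ∑ y, ∑ u,
          X (a, l) (x, y) * Y (y, m) (u, n) * Z (x, u) (b, j) * W b a := by
        simp only [comp1, Finset.sum_mul]
    _ = ∑ a, ∑ b, ∑ x, ∑ u, ∑ y,
          X (a, l) (x, y) * Y (y, m) (u, n) * Z (x, u) (b, j) * W b a :=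
        Finset.sum_congr rfl fun a _ => Finset.sum_congr rfl fun b _ =>
          Finset.sum_congr rfl fun x _ => sum2_comm _
    _ = ∑ u, ∑ y, ∑ a, ∑ b, ∑ x,
          X (a, l) (x, y) * Y (y, m) (u, n) * Z (x, u) (b, j) * W b a := by
        rw [← sum5_comm (fun u y a b x =>
          X (a, l) (x, y) * Y (y, m) (u, n) * Z (x, u) (b, j) * W b a)]
    _ = sprod (wmatC W X Z) Y (l, m) (j, n) := by
        rw [sprod_apply]
        simp only [wmatC, Matrix.of_apply, Finset.sum_mul]
        refine Finset.sum_congr rfl fun u _ => Finset.sum_congr rfl fun y _ =>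
          Finset.sum_congr rfl fun a _ => Finset.sum_congr rfl fun b _ =>
          Finset.sum_congr rfl fun x _ => by ring

lemma cancel_left (R Ψ F : Op ι) (hS2 : sprod Ψ R = Pmat ι)
    (h : sprod R F = 1) : F = sprod Ψ 1 := by
  have h2 : sprod Ψ (sprod R F) = sprod Ψ 1 := by rw [h]
  rwa [← sprod_assoc, hS2, sprod_P_left] at h2

lemma cancel_right (R Ψ F : Op ι) (hS1 : sprod R Ψ = Pmat ι)
    (h : sprod F R = 1) : F = sprod 1 Ψ := by
  have h2 : sprod (sprod F R) Ψ = sprod 1 Ψ := by rw [h]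
  rwa [sprod_assoc, hS1, sprod_P_right] at h2

lemma braid1 (R : Op ι) (hRR : R * R⁻¹ = 1) (hR'R : R⁻¹ * R = 1)
    (hYB : YangBaxter R) :
    op23 R * op12 R * op23 R⁻¹ = op12 R⁻¹ * (op23 R * op12 R) := by
  have hA : op12 R⁻¹ * op12 R = 1 := by rw [op12_mul, hR'R, op12_one]
  have hB : op23 R * op23 R⁻¹ = 1 := by rw [op23_mul, hRR, op23_one]
  have e1 : op12 R⁻¹ * (op12 R * op23 R * op12 R) * op23 R⁻¹
      = op23 R * op12 R * op23 R⁻¹ := by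
    simp only [← mul_assoc]
    rw [hA, one_mul]
  have e2 : op12 R⁻¹ * (op23 R * op12 R * op23 R) * op23 R⁻¹
      = op12 R⁻¹ * (op23 R * op12 R) := by
    simp only [mul_assoc]
    rw [hB, mul_one]
  rw [← e1, hYB, e2]

lemma braid2 (R : Op ι) (hRR : R * R⁻¹ = 1) (hR'R : R⁻¹ * R = 1)
    (hYB : YangBaxter R) :
    op23 R⁻¹ * op12 R * op23 R = op12 R * op23 R * op12 R⁻¹ := by
  have hA : op12 R * op12 R⁻¹ = 1 := by rw [op12_mul, hRR, op12_one]
  have hB : op23 R⁻¹ * op23 R = 1 := by rw [op23_mul, hR'R, op23_one]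
  have e1 : op23 R⁻¹ * (op23 R * op12 R * op23 R) * op12 R⁻¹
      = op12 R * op23 R * op12 R⁻¹ := by
    simp only [← mul_assoc]
    rw [hB, one_mul]
  have e2 : op23 R⁻¹ * (op12 R * op23 R * op12 R) * op12 R⁻¹
      = op23 R⁻¹ * (op12 R * op23 R) := by
    simp only [mul_assoc]
    rw [hA, mul_one]
  calc op23 R⁻¹ * op12 R * op23 R
      = op23 R⁻¹ * (op12 R * op23 R) := mul_assoc _ _ _
    _ = op23 R⁻¹ * (op12 R * op23 R * op12 R) * op12 R⁻¹ := e2.symm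
    _ = op23 R⁻¹ * (op23 R * op12 R * op23 R) * op12 R⁻¹ := by rw [hYB]
    _ = op12 R * op23 R * op12 R⁻¹ := e1

lemma K3 (R Ψ : Op ι) (hS1 : sprod R Ψ = Pmat ι) (hS2 : sprod Ψ R = Pmat ι)
    (hRR : R * R⁻¹ = 1) (hR'R : R⁻¹ * R = 1) (hYB : YangBaxter R) :
    wmatD (tr2 Ψ) R R⁻¹ = u1 (tr2 Ψ) := by
  have h := congrArg (trW3 (tr2 Ψ)) (braid1 R hRR hR'R hYB)
  rw [T3, show op12 R⁻¹ * (op23 R * op12 R) = op12 R⁻¹ * op23 R * op12 R from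
    (mul_assoc _ _ _).symm, T2 R Ψ hS1, hR'R] at h
  rw [← sprod_one_right Ψ]
  exact cancel_left R Ψ _ hS2 h

lemma K3' (R Ψ : Op ι) (hS1 : sprod R Ψ = Pmat ι) (hS2 : sprod Ψ R = Pmat ι)
    (hRR : R * R⁻¹ = 1) (hR'R : R⁻¹ * R = 1) (hYB : YangBaxter R) :
    wmatD (tr2 Ψ) R⁻¹ R = u1 (tr2 Ψ) := by
  have h := congrArg (trW3 (tr2 Ψ)) (braid2 R hRR hR'R hYB)
  rw [T3, T2 R Ψ hS1, hRR] at h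
  rw [← sprod_one_right Ψ]
  exact cancel_left R Ψ _ hS2 h

lemma K3c (R Ψ : Op ι) (hS1 : sprod R Ψ = Pmat ι) (hS2 : sprod Ψ R = Pmat ι)
    (hRR : R * R⁻¹ = 1) (hR'R : R⁻¹ * R = 1) (hYB : YangBaxter R) :
    wmatC (tr1 Ψ) R⁻¹ R = u2 (tr1 Ψ) := by
  have h := congrArg (trW1 (tr1 Ψ)) (braid1 R hRR hR'R hYB)
  rw [T2c R Ψ hS2, hRR, show op12 R⁻¹ * (op23 R * op12 R) = op12 R⁻¹ * op23 R * op12 R from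
    (mul_assoc _ _ _).symm, T3c] at h
  rw [← sprod_one_left Ψ]
  exact cancel_right R Ψ _ hS1 h.symm

lemma K3c' (R Ψ : Op ι) (hS1 : sprod R Ψ = Pmat ι) (hS2 : sprod Ψ R = Pmat ι)
    (hRR : R * R⁻¹ = 1) (hR'R : R⁻¹ * R = 1) (hYB : YangBaxter R) :
    wmatC (tr1 Ψ) R R⁻¹ = u2 (tr1 Ψ) := by
  have h := congrArg (trW1 (tr1 Ψ)) (braid2 R hRR hR'R hYB)
  rw [T2c R Ψ hS2, hR'R, T3c] at h
  rw [← sprod_one_left Ψ]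
  exact cancel_right R Ψ _ hS1 h.symm

lemma M2 (R Ψ : Op ι) (hS2 : sprod Ψ R = Pmat ι)
    (hK : wmatD (tr2 Ψ) R R⁻¹ = u1 (tr2 Ψ)) (l k i j : ι) :
    ∑ u, tr2 Ψ l u * Ψ (k, u) (i, j) = ∑ n, R⁻¹ (l, k) (j, n) * tr2 Ψ n i := by
  have hKc : ∀ y l₀ u j₀, (∑ m, ∑ n, ∑ v,
      R (l₀, m) (u, v) * R⁻¹ (y, v) (j₀, n) * tr2 Ψ n m)
        = tr2 Ψ y u * (if l₀ = j₀ then 1 else 0) := by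
    intro y l₀ u j₀
    have h0 : wmatD (tr2 Ψ) R R⁻¹ (y, l₀) (u, j₀) = u1 (tr2 Ψ) (y, l₀) (u, j₀) := by
      rw [hK]
    simpa [wmatD, u1] using h0
  calc ∑ u, tr2 Ψ l u * Ψ (k, u) (i, j)
      = ∑ u, ∑ l₀, Ψ (k, u) (i, l₀) * (tr2 Ψ l u * (if l₀ = j then 1 else 0)) := by
        refine Finset.sum_congr rfl fun u _ => ?_
        simp [mul_ite, Finset.sum_ite_eq', mul_comm]
    _ = ∑ u, ∑ l₀, Ψ (k, u) (i, l₀) * (∑ m, ∑ n, ∑ v,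
          R (l₀, m) (u, v) * R⁻¹ (l, v) (j, n) * tr2 Ψ n m) := by
        refine Finset.sum_congr rfl fun u _ => Finset.sum_congr rfl fun l₀ _ => ?_
        rw [hKc l l₀ u j]
    _ = ∑ u, ∑ l₀, ∑ m, ∑ n, ∑ v,
          Ψ (k, u) (i, l₀) * (R (l₀, m) (u, v) * R⁻¹ (l, v) (j, n) * tr2 Ψ n m) := by
        simp only [Finset.mul_sum]
    _ = ∑ m, ∑ n, ∑ v, ∑ u, ∑ l₀,
          Ψ (k, u) (i, l₀) * (R (l₀, m) (u, v) * R⁻¹ (l, v) (j, n) * tr2 Ψ n m) :=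
        sum5_comm _
    _ = ∑ m, ∑ n, ∑ v, ∑ l₀, ∑ u,
          Ψ (k, u) (i, l₀) * (R (l₀, m) (u, v) * R⁻¹ (l, v) (j, n) * tr2 Ψ n m) :=
        Finset.sum_congr rfl fun m _ => Finset.sum_congr rfl fun n _ =>
          Finset.sum_congr rfl fun v _ => sum2_comm _
    _ = ∑ m, ∑ n, ∑ v, (∑ l₀, ∑ u, Ψ (k, u) (i, l₀) * R (l₀, m) (u, v)) *
          (R⁻¹ (l, v) (j, n) * tr2 Ψ n m) := by
        refine Finset.sum_congr rfl fun m _ => Finset.sum_congr rfl fun n _ =>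
          Finset.sum_congr rfl fun v _ => ?_
        simp only [Finset.sum_mul]
        exact Finset.sum_congr rfl fun l₀ _ => Finset.sum_congr rfl fun u _ => by ring
    _ = ∑ m, ∑ n, ∑ v, Pmat ι (k, m) (i, v) * (R⁻¹ (l, v) (j, n) * tr2 Ψ n m) := by
        refine Finset.sum_congr rfl fun m _ => Finset.sum_congr rfl fun n _ =>
          Finset.sum_congr rfl fun v _ => ?_
        rw [← hS2, sprod_apply, sum2_comm (fun u l₀ => Ψ (k, u) (i, l₀) * R (l₀, m) (u, v))]
    _ = ∑ n, R⁻¹ (l, k) (j, n) * tr2 Ψ n i := by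
        simp only [Pmat, Matrix.of_apply, ite_and, ite_mul, one_mul, zero_mul]
        rw [sum3_cyc (fun m n v => if k = v then if m = i then
          R⁻¹ (l, v) (j, n) * tr2 Ψ n m else 0 else 0)]
        simp [Finset.sum_ite_eq, Finset.sum_ite_eq']

lemma M1 (R Ψ : Op ι) (hS2 : sprod Ψ R = Pmat ι)
    (hK : wmatD (tr2 Ψ) R⁻¹ R = u1 (tr2 Ψ)) (p l₀ q u : ι) :
    ∑ y, Ψ (p, l₀) (q, y) * tr2 Ψ y u = ∑ m, R⁻¹ (l₀, m) (u, q) * tr2 Ψ p m := by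
  have hKc : ∀ y l₁ u₁ j₀, (∑ m, ∑ n, ∑ v,
      R⁻¹ (l₁, m) (u₁, v) * R (y, v) (j₀, n) * tr2 Ψ n m)
        = tr2 Ψ y u₁ * (if l₁ = j₀ then 1 else 0) := by
    intro y l₁ u₁ j₀
    have h0 : wmatD (tr2 Ψ) R⁻¹ R (y, l₁) (u₁, j₀) = u1 (tr2 Ψ) (y, l₁) (u₁, j₀) := by
      rw [hK]
    simpa [wmatD, u1] using h0
  calc ∑ y, Ψ (p, l₀) (q, y) * tr2 Ψ y u
      = ∑ y, ∑ j₀, Ψ (p, j₀) (q, y) * (tr2 Ψ y u * (if l₀ = j₀ then 1 else 0)) := by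
        refine Finset.sum_congr rfl fun y _ => ?_
        simp [mul_ite, Finset.sum_ite_eq, mul_comm]
    _ = ∑ y, ∑ j₀, Ψ (p, j₀) (q, y) * (∑ m, ∑ n, ∑ v,
          R⁻¹ (l₀, m) (u, v) * R (y, v) (j₀, n) * tr2 Ψ n m) := by
        refine Finset.sum_congr rfl fun y _ => Finset.sum_congr rfl fun j₀ _ => ?_
        rw [hKc y l₀ u j₀]
    _ = ∑ y, ∑ j₀, ∑ m, ∑ n, ∑ v,
          Ψ (p, j₀) (q, y) * (R⁻¹ (l₀, m) (u, v) * R (y, v) (j₀, n) * tr2 Ψ n m) := by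
        simp only [Finset.mul_sum]
    _ = ∑ m, ∑ n, ∑ v, ∑ y, ∑ j₀,
          Ψ (p, j₀) (q, y) * (R⁻¹ (l₀, m) (u, v) * R (y, v) (j₀, n) * tr2 Ψ n m) :=
        sum5_comm _
    _ = ∑ m, ∑ n, ∑ v, ∑ j₀, ∑ y,
          Ψ (p, j₀) (q, y) * (R⁻¹ (l₀, m) (u, v) * R (y, v) (j₀, n) * tr2 Ψ n m) :=
        Finset.sum_congr rfl fun m _ => Finset.sum_congr rfl fun n _ =>
          Finset.sum_congr rfl fun v _ => sum2_comm _
    _ = ∑ m, ∑ n, ∑ v, (∑ j₀, ∑ y, Ψ (p, j₀) (q, y) * R (y, v) (j₀, n)) *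
          (R⁻¹ (l₀, m) (u, v) * tr2 Ψ n m) := by
        refine Finset.sum_congr rfl fun m _ => Finset.sum_congr rfl fun n _ =>
          Finset.sum_congr rfl fun v _ => ?_
        simp only [Finset.sum_mul]
        exact Finset.sum_congr rfl fun j₀ _ => Finset.sum_congr rfl fun y _ => by ring
    _ = ∑ m, ∑ n, ∑ v, Pmat ι (p, v) (q, n) * (R⁻¹ (l₀, m) (u, v) * tr2 Ψ n m) := by
        refine Finset.sum_congr rfl fun m _ => Finset.sum_congr rfl fun n _ =>
          Finset.sum_congr rfl fun v _ => ?_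
        rw [← hS2, sprod_apply]
    _ = ∑ m, R⁻¹ (l₀, m) (u, q) * tr2 Ψ p m := by
        simp only [Pmat, Matrix.of_apply, ite_and, ite_mul, one_mul, zero_mul]
        simp [Finset.sum_ite_eq, Finset.sum_ite_eq']

lemma M1c (R Ψ : Op ι) (hS1 : sprod R Ψ = Pmat ι)
    (hK : wmatC (tr1 Ψ) R⁻¹ R = u2 (tr1 Ψ)) (l s t y : ι) :
    ∑ u, Ψ (l, s) (u, t) * tr1 Ψ u y = ∑ a, R⁻¹ (a, l) (t, y) * tr1 Ψ s a := by
  have hKc : ∀ l₁ u j₀ y₁, (∑ a, ∑ b, ∑ x,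
      R⁻¹ (a, l₁) (x, y₁) * R (x, u) (b, j₀) * tr1 Ψ b a)
        = (if l₁ = j₀ then 1 else 0) * tr1 Ψ u y₁ := by
    intro l₁ u j₀ y₁
    have h0 : wmatC (tr1 Ψ) R⁻¹ R (l₁, u) (j₀, y₁) = u2 (tr1 Ψ) (l₁, u) (j₀, y₁) := by
      rw [hK]
    simpa [wmatC, u2] using h0
  calc ∑ u, Ψ (l, s) (u, t) * tr1 Ψ u y
      = ∑ u, ∑ j, Ψ (j, s) (u, t) * ((if l = j then 1 else 0) * tr1 Ψ u y) := by
        refine Finset.sum_congr rfl fun u _ => ?_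
        simp [mul_ite, ite_mul, Finset.sum_ite_eq, mul_comm]
    _ = ∑ u, ∑ j, Ψ (j, s) (u, t) * (∑ a, ∑ b, ∑ x,
          R⁻¹ (a, l) (x, y) * R (x, u) (b, j) * tr1 Ψ b a) := by
        refine Finset.sum_congr rfl fun u _ => Finset.sum_congr rfl fun j _ => ?_
        rw [hKc l u j y]
    _ = ∑ u, ∑ j, ∑ a, ∑ b, ∑ x,
          Ψ (j, s) (u, t) * (R⁻¹ (a, l) (x, y) * R (x, u) (b, j) * tr1 Ψ b a) := by
        simp only [Finset.mul_sum]
    _ = ∑ a, ∑ b, ∑ x, ∑ u, ∑ j,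
          Ψ (j, s) (u, t) * (R⁻¹ (a, l) (x, y) * R (x, u) (b, j) * tr1 Ψ b a) :=
        sum5_comm _
    _ = ∑ a, ∑ b, ∑ x, (∑ u, ∑ j, R (x, u) (b, j) * Ψ (j, s) (u, t)) *
          (R⁻¹ (a, l) (x, y) * tr1 Ψ b a) := by
        refine Finset.sum_congr rfl fun a _ => Finset.sum_congr rfl fun b _ =>
          Finset.sum_congr rfl fun x _ => ?_
        simp only [Finset.sum_mul]
        exact Finset.sum_congr rfl fun u _ => Finset.sum_congr rfl fun j _ => by ring
    _ = ∑ a, ∑ b, ∑ x, Pmat ι (x, s) (b, t) * (R⁻¹ (a, l) (x, y) * tr1 Ψ b a) := by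
        refine Finset.sum_congr rfl fun a _ => Finset.sum_congr rfl fun b _ =>
          Finset.sum_congr rfl fun x _ => ?_
        rw [← hS1, sprod_apply]
    _ = ∑ a, R⁻¹ (a, l) (t, y) * tr1 Ψ s a := by
        simp only [Pmat, Matrix.of_apply, ite_and, ite_mul, one_mul, zero_mul]
        simp [Finset.sum_ite_eq, Finset.sum_ite_eq']

lemma M2c (R Ψ : Op ι) (hS1 : sprod R Ψ = Pmat ι)
    (hK : wmatC (tr1 Ψ) R R⁻¹ = u2 (tr1 Ψ)) (s u j t : ι) :
    ∑ y, Ψ (y, s) (j, t) * tr1 Ψ u y = ∑ b, R⁻¹ (s, u) (b, j) * tr1 Ψ b t := by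
  have hKc : ∀ l₁ u₁ j₀ y₁, (∑ a, ∑ b, ∑ x,
      R (a, l₁) (x, y₁) * R⁻¹ (x, u₁) (b, j₀) * tr1 Ψ b a)
        = (if l₁ = j₀ then 1 else 0) * tr1 Ψ u₁ y₁ := by
    intro l₁ u₁ j₀ y₁
    have h0 : wmatC (tr1 Ψ) R R⁻¹ (l₁, u₁) (j₀, y₁) = u2 (tr1 Ψ) (l₁, u₁) (j₀, y₁) := by
      rw [hK]
    simpa [wmatC, u2] using h0
  calc ∑ y, Ψ (y, s) (j, t) * tr1 Ψ u y
      = ∑ y, ∑ l₀, Ψ (y, s) (l₀, t) * ((if l₀ = j then 1 else 0) * tr1 Ψ u y) := by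
        refine Finset.sum_congr rfl fun y _ => ?_
        simp [mul_ite, ite_mul, Finset.sum_ite_eq', mul_comm]
    _ = ∑ y, ∑ l₀, Ψ (y, s) (l₀, t) * (∑ a, ∑ b, ∑ x,
          R (a, l₀) (x, y) * R⁻¹ (x, u) (b, j) * tr1 Ψ b a) := by
        refine Finset.sum_congr rfl fun y _ => Finset.sum_congr rfl fun l₀ _ => ?_
        rw [hKc l₀ u j y]
    _ = ∑ y, ∑ l₀, ∑ a, ∑ b, ∑ x,
          Ψ (y, s) (l₀, t) * (R (a, l₀) (x, y) * R⁻¹ (x, u) (b, j) * tr1 Ψ b a) := by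
        simp only [Finset.mul_sum]
    _ = ∑ a, ∑ b, ∑ x, ∑ y, ∑ l₀,
          Ψ (y, s) (l₀, t) * (R (a, l₀) (x, y) * R⁻¹ (x, u) (b, j) * tr1 Ψ b a) :=
        sum5_comm _
    _ = ∑ a, ∑ b, ∑ x, ∑ l₀, ∑ y,
          Ψ (y, s) (l₀, t) * (R (a, l₀) (x, y) * R⁻¹ (x, u) (b, j) * tr1 Ψ b a) :=
        Finset.sum_congr rfl fun a _ => Finset.sum_congr rfl fun b _ =>
          Finset.sum_congr rfl fun x _ => sum2_comm _
    _ = ∑ a, ∑ b, ∑ x, (∑ l₀, ∑ y, R (a, l₀) (x, y) * Ψ (y, s) (l₀, t)) *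
          (R⁻¹ (x, u) (b, j) * tr1 Ψ b a) := by
        refine Finset.sum_congr rfl fun a _ => Finset.sum_congr rfl fun b _ =>
          Finset.sum_congr rfl fun x _ => ?_
        simp only [Finset.sum_mul]
        exact Finset.sum_congr rfl fun l₀ _ => Finset.sum_congr rfl fun y _ => by ring
    _ = ∑ a, ∑ b, ∑ x, Pmat ι (a, s) (x, t) * (R⁻¹ (x, u) (b, j) * tr1 Ψ b a) := by
        refine Finset.sum_congr rfl fun a _ => Finset.sum_congr rfl fun b _ =>
          Finset.sum_congr rfl fun x _ => ?_
        rw [← hS1, sprod_apply]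
    _ = ∑ b, R⁻¹ (s, u) (b, j) * tr1 Ψ b t := by
        simp only [Pmat, Matrix.of_apply, ite_and, ite_mul, one_mul, zero_mul]
        rw [sum3_cyc (fun a b x => if a = t then if s = x then
          R⁻¹ (x, u) (b, j) * tr1 Ψ b a else 0 else 0)]
        simp [Finset.sum_ite_eq, Finset.sum_ite_eq']

lemma PmP_apply (M : Op ι) (k l i j : ι) :
    (Pmat ι * M * Pmat ι) (k, l) (i, j) = M (l, k) (j, i) := by
  simp [Matrix.mul_apply, Pmat, Fintype.sum_prod_type, ite_and, ite_mul, mul_ite,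
    Finset.sum_ite_eq, Finset.sum_ite_eq']

/-- Proposition 1: for an invertible skew-invertible R-matrix `R` with
skew inverse `Ψ`, `C := Tr₍₁₎Ψ`, `D := Tr₍₂₎Ψ`:
`C₁Ψ = R₂₁⁻¹C₂`, `ΨC₁ = C₂R₂₁⁻¹`, `D₂Ψ = R₂₁⁻¹D₁`, `ΨD₂ = D₁R₂₁⁻¹`. -/
theorem stmt6 {ι : Type*} [Fintype ι] [DecidableEq ι] [Nonempty ι]
    (R Ψ : Op ι) (hR : IsUnit R) (hYB : YangBaxter R) (hskew : SkewInverse R Ψ) :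
    u1 (tr1 Ψ) * Ψ = (Pmat ι * R * Pmat ι)⁻¹ * u2 (tr1 Ψ) ∧
    Ψ * u1 (tr1 Ψ) = u2 (tr1 Ψ) * (Pmat ι * R * Pmat ι)⁻¹ ∧
    u2 (tr2 Ψ) * Ψ = (Pmat ι * R * Pmat ι)⁻¹ * u1 (tr2 Ψ) ∧
    Ψ * u2 (tr2 Ψ) = u1 (tr2 Ψ) * (Pmat ι * R * Pmat ι)⁻¹ := by
  obtain ⟨hsk1, hsk2⟩ := hskew
  rw [tr2of3_op] at hsk1 hsk2
  have hdet : IsUnit R.det := (Matrix.isUnit_iff_isUnit_det R).mp hR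
  have hRR : R * R⁻¹ = 1 := Matrix.mul_nonsing_inv R hdet
  have hR'R : R⁻¹ * R = 1 := Matrix.nonsing_inv_mul R hdet
  have hPinv : (Pmat ι * R * Pmat ι)⁻¹ = Pmat ι * R⁻¹ * Pmat ι := by
    apply Matrix.inv_eq_right_inv
    calc Pmat ι * R * Pmat ι * (Pmat ι * R⁻¹ * Pmat ι)
        = Pmat ι * (R * ((Pmat ι * Pmat ι) * (R⁻¹ * Pmat ι))) := by
          simp only [mul_assoc]
      _ = Pmat ι * (R * (R⁻¹ * Pmat ι)) := by rw [Pmat_mul_Pmat, one_mul]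
      _ = Pmat ι * ((R * R⁻¹) * Pmat ι) := by rw [mul_assoc]
      _ = 1 := by rw [hRR, one_mul, Pmat_mul_Pmat]
  have k1 := K3 R Ψ hsk1 hsk2 hRR hR'R hYB
  have k2 := K3' R Ψ hsk1 hsk2 hRR hR'R hYB
  have k3 := K3c R Ψ hsk1 hsk2 hRR hR'R hYB
  have k4 := K3c' R Ψ hsk1 hsk2 hRR hR'R hYB
  refine ⟨?_, ?_, ?_, ?_⟩
  · rw [hPinv]
    ext ⟨k, l⟩ ⟨i, j⟩
    have e1 : (u1 (tr1 Ψ) * Ψ) (k, l) (i, j) = ∑ a, tr1 Ψ k a * Ψ (a, l) (i, j) := by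
      simp [Matrix.mul_apply, u1, Fintype.sum_prod_type, mul_ite, ite_mul,
        Finset.sum_ite_eq, Finset.sum_ite_eq']
    have e2 : (Pmat ι * R⁻¹ * Pmat ι * u2 (tr1 Ψ)) (k, l) (i, j)
        = ∑ b, R⁻¹ (l, k) (b, i) * tr1 Ψ b j := by
      rw [Matrix.mul_apply, Fintype.sum_prod_type]
      simp only [PmP_apply, u2, Matrix.of_apply]
      simp [mul_ite, ite_mul, Finset.sum_ite_eq, Finset.sum_ite_eq']
    rw [e1, e2, ← M2c R Ψ hsk1 k4 l k i j]
    exact Finset.sum_congr rfl fun y _ => mul_comm _ _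
  · rw [hPinv]
    ext ⟨k, l⟩ ⟨i, j⟩
    have e1 : (Ψ * u1 (tr1 Ψ)) (k, l) (i, j) = ∑ a, Ψ (k, l) (a, j) * tr1 Ψ a i := by
      simp [Matrix.mul_apply, u1, Fintype.sum_prod_type, mul_ite, ite_mul,
        Finset.sum_ite_eq, Finset.sum_ite_eq']
    have e2 : (u2 (tr1 Ψ) * (Pmat ι * R⁻¹ * Pmat ι)) (k, l) (i, j)
        = ∑ b, tr1 Ψ l b * R⁻¹ (b, k) (j, i) := by
      rw [Matrix.mul_apply, Fintype.sum_prod_type]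
      simp only [PmP_apply, u2, Matrix.of_apply]
      simp [mul_ite, ite_mul, Finset.sum_ite_eq, Finset.sum_ite_eq']
    rw [e1, e2, M1c R Ψ hsk1 k3 k l j i]
    exact Finset.sum_congr rfl fun a _ => mul_comm _ _
  · rw [hPinv]
    ext ⟨k, l⟩ ⟨i, j⟩
    have e1 : (u2 (tr2 Ψ) * Ψ) (k, l) (i, j) = ∑ b, tr2 Ψ l b * Ψ (k, b) (i, j) := by
      simp [Matrix.mul_apply, u2, Fintype.sum_prod_type, mul_ite, ite_mul,
        Finset.sum_ite_eq, Finset.sum_ite_eq']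
    have e2 : (Pmat ι * R⁻¹ * Pmat ι * u1 (tr2 Ψ)) (k, l) (i, j)
        = ∑ a, R⁻¹ (l, k) (j, a) * tr2 Ψ a i := by
      rw [Matrix.mul_apply, Fintype.sum_prod_type]
      simp only [PmP_apply, u1, Matrix.of_apply]
      simp [mul_ite, ite_mul, Finset.sum_ite_eq, Finset.sum_ite_eq']
    rw [e1, e2]
    exact M2 R Ψ hsk2 k1 l k i j
  · rw [hPinv]
    ext ⟨k, l⟩ ⟨i, j⟩
    have e1 : (Ψ * u2 (tr2 Ψ)) (k, l) (i, j) = ∑ b, Ψ (k, l) (i, b) * tr2 Ψ b j := by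
      simp [Matrix.mul_apply, u2, Fintype.sum_prod_type, mul_ite, ite_mul,
        Finset.sum_ite_eq, Finset.sum_ite_eq']
    have e2 : (u1 (tr2 Ψ) * (Pmat ι * R⁻¹ * Pmat ι)) (k, l) (i, j)
        = ∑ a, tr2 Ψ k a * R⁻¹ (l, a) (j, i) := by
      rw [Matrix.mul_apply, Fintype.sum_prod_type]
      simp only [PmP_apply, u1, Matrix.of_apply]
      simp [mul_ite, ite_mul, Finset.sum_ite_eq, Finset.sum_ite_eq']
    rw [e1, e2, M1 R Ψ hsk2 k2 k l i j]
    exact Finset.sum_congr rfl fun m _ => mul_comm _ _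

end

end BMWPaper
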